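/- Let q ≥ 2 and ζ be a q-uniform binary substitution with ζ(0) starting with 0 and ζ(0) ≠ ζ(1), with fixed point x. If w is a nonempty subword of x, i is an occurrence index of w (x_{[i,i+|w|)} = w), and p_i := i mod q satisfies p_i + |w| ≥ q, then there exists a 1-cutting of w at index i; moreover, for two occurrence indices i, i' with p_i + |w| ≥ q and p_{i'} + |w| ≥ q, the resulting 1-cuttings coincide if and only if p_i = p_{i'}. -/

import Mathlib

/-- The word `w` occurs in `x` at index `i`. -/
def OccursAt (x : ℕ → Bool) (w : List Bool) (i : ℕ) : Prop :=
  ∀ t, t < w.length → x (i + t) = w.getD t false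

/-- A 1-cutting at index `i` of the length-`ℓ` subword of `x` starting at `i`, for a
`q`-uniform substitution `ζ` with fixed point `x`; `sLen` records the length of the
initial piece `s` (a proper suffix of `ζ (x (j-1))`, empty when `j = 0`), so the cutting
is the tuple `[s, ζ(x_j), …, ζ(x_{j+k-1}), t]` with `t` a proper prefix of `ζ (x (j+k))`;
the last clause is the alignment of the cutting bars `E₁ = qℕ₀` in `[i, i+ℓ)` with those
in `[l, l+ℓ)`, `l = q·j − sLen`. -/
def OneCuttingAt (q : ℕ) (ζ : Bool → List Bool) (x : ℕ → Bool) (i ℓ sLen : ℕ) : Prop :=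
  ∃ j k tLen : ℕ,
    sLen + k * q + tLen = ℓ ∧ sLen < q ∧ tLen < q ∧
    (j = 0 → sLen = 0) ∧
    (sLen ≠ 0 → 1 ≤ j ∧
      ∀ t', t' < sLen → x (i + t') = (ζ (x (j - 1))).getD (q - sLen + t') false) ∧
    (∀ h, h < k → ∀ t', t' < q →
      x (i + sLen + h * q + t') = (ζ (x (j + h))).getD t' false) ∧
    (∀ t', t' < tLen → x (i + sLen + k * q + t') = (ζ (x (j + k))).getD t' false) ∧
    (∀ e : ℤ, ((i : ℤ) ≤ e ∧ e < (i : ℤ) + ℓ ∧ (q : ℤ) ∣ e) ↔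
      ((i : ℤ) ≤ e ∧ e < (i : ℤ) + ℓ ∧ (q : ℤ) ∣ (e - i + ((q : ℤ) * j - sLen))))

private lemma slen_dvd (q i : ℕ) (hq : 0 < q) : (i + (q - i % q) % q) % q = 0 := by
  rcases Nat.eq_zero_or_pos (i % q) with h0 | h0
  · rw [h0, Nat.sub_zero, Nat.mod_self, Nat.add_zero]; exact h0
  · have hr : i % q < q := Nat.mod_lt _ hq
    rw [show (q - i % q) % q = q - i % q from Nat.mod_eq_of_lt (by omega)]
    have h1 := Nat.div_add_mod i q
    have h2 : i + (q - i % q) = q * (i / q + 1) := by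
      rw [Nat.mul_add, Nat.mul_one]; omega
    rw [h2]; exact Nat.mul_mod_right q _

private lemma mod_inj (q r r' : ℕ) (hq : 0 < q) (hr : r < q) (hr' : r' < q)
    (h : (q - r) % q = (q - r') % q) : r = r' := by
  rcases Nat.eq_zero_or_pos r with h0 | h0 <;> rcases Nat.eq_zero_or_pos r' with h0' | h0'
  · omega
  · rw [h0, Nat.sub_zero, Nat.mod_self, Nat.mod_eq_of_lt (by omega)] at h; omega
  · rw [h0', Nat.sub_zero, Nat.mod_self, Nat.mod_eq_of_lt (by omega)] at h; omega
  · rw [Nat.mod_eq_of_lt (by omega), Nat.mod_eq_of_lt (by omega)] at h; omega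

private lemma exists_cut (q : ℕ) (hq : 0 < q) (ζ : Bool → List Bool) (x : ℕ → Bool)
    (hfix : ∀ k t, t < q → x (k * q + t) = (ζ (x k)).getD t false)
    (i ℓ : ℕ) (hℓ : 1 ≤ ℓ) (hge : q ≤ i % q + ℓ) :
    OneCuttingAt q ζ x i ℓ ((q - i % q) % q) := by
  set sLen := (q - i % q) % q with hsdef
  have hsq : sLen < q := Nat.mod_lt _ hq
  have hsle : sLen ≤ ℓ := le_trans (Nat.mod_le _ _) (by omega)
  obtain ⟨j, hij⟩ : ∃ j, i + sLen = q * j := Nat.dvd_of_mod_eq_zero (slen_dvd q i hq)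
  refine ⟨j, (ℓ - sLen) / q, (ℓ - sLen) % q, ?_, hsq, Nat.mod_lt _ hq, ?_, ?_, ?_, ?_, ?_⟩
  · have := Nat.mod_add_div' (ℓ - sLen) q; omega
  · intro hj0; rw [hj0, Nat.mul_zero] at hij; omega
  · intro hs
    have hj1 : 1 ≤ j := by
      rcases Nat.eq_zero_or_pos j with h | h
      · rw [h, Nat.mul_zero] at hij; omega
      · exact h
    refine ⟨hj1, fun t' ht' => ?_⟩
    have h3 : q * j = q * (j - 1) + q := by
      conv_lhs => rw [show j = (j - 1) + 1 by omega]
      ring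
    have h2 : i + t' = (j - 1) * q + (q - sLen + t') := by rw [mul_comm]; omega
    rw [h2]; exact hfix (j - 1) _ (by omega)
  · intro h hk t' ht'
    rw [show i + sLen + h * q + t' = (j + h) * q + t' from by rw [add_mul, mul_comm j q]; omega]
    exact hfix _ _ ht'
  · intro t' ht'
    rw [show i + sLen + ((ℓ - sLen) / q) * q + t' = (j + (ℓ - sLen) / q) * q + t' from by
      rw [add_mul, mul_comm j q]; omega]
    exact hfix _ _ (lt_trans ht' (Nat.mod_lt _ hq))
  · have h9 : (i : ℤ) + sLen = (q : ℤ) * j := by exact_mod_cast hij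
    have hji : (q : ℤ) * j - sLen = i := by linarith
    intro e
    constructor <;> rintro ⟨h1, h2, h3⟩ <;> refine ⟨h1, h2, ?_⟩
    · rw [hji]; simpa using h3
    · rw [hji] at h3; simpa using h3

private lemma key (q : ℕ) (hq : 0 < q) (ζ : Bool → List Bool) (x : ℕ → Bool)
    (i ℓ sLen : ℕ) (hℓ : 1 ≤ ℓ) (hge : q ≤ i % q + ℓ)
    (h : OneCuttingAt q ζ x i ℓ sLen) : sLen = (q - i % q) % q := by
  obtain ⟨j, k, tLen, hsum, hsq, htq, -, -, -, -, halign⟩ := h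
  set s0 := (q - i % q) % q with hs0def
  have hr : i % q < q := Nat.mod_lt _ hq
  have hs0q : s0 < q := Nat.mod_lt _ hq
  have hs0le : s0 ≤ ℓ := le_trans (Nat.mod_le _ _) (by omega)
  have hds0 : (q : ℤ) ∣ ((i : ℤ) + s0) := by
    have h1 : q ∣ i + s0 := Nat.dvd_of_mod_eq_zero (slen_dvd q i hq)
    exact_mod_cast Int.natCast_dvd_natCast.mpr h1
  have hsℓ : sLen ≤ ℓ := by omega
  have hcore : (q : ℤ) ∣ (s0 : ℤ) - sLen := by
    rcases lt_or_eq_of_le hs0le with hlt | heq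
    · have h3 := ((halign ((i : ℤ) + s0)).mp ⟨by omega, by omega, hds0⟩).2.2
      have h5 := h3.sub (Dvd.intro _ rfl : (q : ℤ) ∣ (q : ℤ) * j)
      convert h5 using 1; rfl; ring
    · rcases lt_or_eq_of_le hsℓ with hlt2 | heq2
      · have h3 := ((halign ((i : ℤ) + sLen)).mpr
          ⟨by omega, by omega, ⟨j, by push_cast; ring⟩⟩).2.2
        have h5 := hds0.sub h3
        convert h5 using 1; rfl; ring
      · rw [heq2, ← heq]; simp
  have h6 : (s0 : ℤ) - sLen = 0 := Int.eq_zero_of_abs_lt_dvd hcore (by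
    rw [abs_lt]; constructor <;> push_cast <;> omega)
  omega


/-- Let `ζ` be a `q`-uniform binary substitution (`q ≥ 2`) with `ζ 0`
starting with `0` and `ζ 0 ≠ ζ 1`, with fixed point `x`, and let `w` be a nonempty
subword of `x`.  If `i` is an occurrence index of `w` with `(i % q) + |w| ≥ q`, then
there is a 1-cutting of `w` at `i`; moreover, for occurrence indices `i, i'` with
`(i % q) + |w| ≥ q` and `(i' % q) + |w| ≥ q`, the corresponding 1-cuttings coincide
(equal initial-piece lengths, hence equal tuples of words) iff `i % q = i' % q`. -/
theorem stmt_18 (q : ℕ) (hq : 2 ≤ q) (ζ : Bool → List Bool)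
    (hlen : ∀ c, (ζ c).length = q)
    (hne : ζ false ≠ ζ true)
    (hζ00 : (ζ false).getD 0 false = false)
    (x : ℕ → Bool) (hx0 : x 0 = false)
    (hfix : ∀ k t, t < q → x (k * q + t) = (ζ (x k)).getD t false)
    (w : List Bool) (hwne : w ≠ []) :
    (∀ i, OccursAt x w i → q ≤ i % q + w.length →
      ∃ sLen, OneCuttingAt q ζ x i w.length sLen) ∧
    (∀ i i', OccursAt x w i → OccursAt x w i' →
      q ≤ i % q + w.length → q ≤ i' % q + w.length →
      ∀ sLen sLen', OneCuttingAt q ζ x i w.length sLen →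
        OneCuttingAt q ζ x i' w.length sLen' →
        (sLen = sLen' ↔ i % q = i' % q)) := by
  
  have hq0 : 0 < q := by omega
  have hℓ : 1 ≤ w.length := List.length_pos_iff.mpr hwne
  constructor
  · intro i _ hge
    exact ⟨_, exists_cut q hq0 ζ x hfix i w.length hℓ hge⟩
  · intro i i' _ _ hge hge' sLen sLen' h h'
    have e1 := key q hq0 ζ x i _ sLen hℓ hge h
    have e2 := key q hq0 ζ x i' _ sLen' hℓ hge' h'
    constructor
    · intro hss
      exact mod_inj q (i % q) (i' % q) hq0 (Nat.mod_lt _ hq0) (Nat.mod_lt _ hq0)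
        (by rw [← e1, ← e2, hss])
    · intro hrr
      rw [e1, e2, hrr]
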